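/- (Airy function right-tail asymptotics) As x → +∞, Ai(x) ~ e^{−(2/3)x^{3/2}} / (2√π x^{1/4}), i.e. the ratio Ai(x) · 2√π x^{1/4} e^{(2/3)x^{3/2}} tends to 1. -/

import Mathlib

open Real Filter intervalIntegral MeasureTheory Complex

noncomputable def Fc (x : ℝ) (z : ℂ) : ℂ := Complex.exp (Complex.I * (z ^ 3 / 3 + x * z))

lemma Fc_diff (x : ℝ) : Differentiable ℂ (Fc x) := by
  apply Differentiable.cexp
  apply Differentiable.const_mul
  exact (differentiable_pow 3).div_const 3 |>.add ((differentiable_id).const_mul _)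

lemma I_pow_three : Complex.I ^ 3 = -Complex.I := by
  rw [pow_succ, Complex.I_sq]; ring

lemma Fc_norm (x σ s R : ℝ) (hσ : σ = 1 ∨ σ = -1) :
    ‖Fc x (σ * R + s * Complex.I)‖ = Real.exp (-(R^2 * s) + s^3/3 - x * s) := by
  have hσ2 : σ^2 = 1 := by rcases hσ with h | h <;> simp [h]
  rw [Fc, Complex.norm_exp]
  congr 1
  have h3 : ((σ:ℂ) * R + s * Complex.I) ^ 3
      = (σ^3 * R^3 - 3*σ*R*s^2 : ℝ) + (3*σ^2*R^2*s - s^3 : ℝ) * Complex.I := by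
    push_cast; ring_nf; rw [Complex.I_sq, _root_.I_pow_three]; ring
  rw [h3]
  have : Complex.I * (((σ^3 * R^3 - 3*σ*R*s^2 : ℝ) + (3*σ^2*R^2*s - s^3 : ℝ) * Complex.I) / 3
      + x * ((σ:ℂ) * R + s * Complex.I))
      = (-(3*σ^2*R^2*s - s^3)/3 - x*s : ℝ)
        + ((σ^3*R^3 - 3*σ*R*s^2)/3 + x*σ*R : ℝ) * Complex.I := by
    push_cast; ring_nf; rw [Complex.I_sq]; ring
  rw [this]
  simp only [Complex.add_re, Complex.ofReal_re, Complex.mul_re, Complex.I_re, Complex.I_im,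
    Complex.ofReal_im]
  rw [hσ2]; ring

example : True := trivial

lemma Fc_cont (x : ℝ) : Continuous (Fc x) := (Fc_diff x).continuous

lemma rect_eq (x a R : ℝ) :
    (∫ t : ℝ in -R..R, Fc x t) - (∫ t : ℝ in -R..R, Fc x (t + a * Complex.I)) +
      Complex.I • (∫ s : ℝ in (0:ℝ)..a, Fc x (R + s * Complex.I)) -
      Complex.I • (∫ s : ℝ in (0:ℝ)..a, Fc x (-R + s * Complex.I)) = 0 := by
  have := Complex.integral_boundary_rect_eq_zero_of_differentiableOn (Fc x) (-R)
    (R + a * Complex.I) ((Fc_diff x).differentiableOn)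
  simpa only [neg_im, ofReal_im, neg_zero, ofReal_zero, zero_mul, add_zero, neg_re, ofReal_re,
    add_re, mul_re, I_re, mul_zero, I_im, tsub_zero, add_im, mul_im, mul_one, zero_add,
    ofReal_neg] using this

lemma side_tendsto (x a σ : ℝ) (hx : 0 ≤ x) (ha : 0 ≤ a) (hσ : σ = 1 ∨ σ = -1) :
    Tendsto (fun R : ℝ => ∫ s in (0:ℝ)..a, Fc x (σ * R + s * Complex.I)) atTop (nhds 0) := by
  have h0 : (0 : ℂ) = ∫ s in (0:ℝ)..a, (0 : ℂ) := by simp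
  rw [h0]
  apply intervalIntegral.tendsto_integral_filter_of_dominated_convergence
      (fun _ => Real.exp (a ^ 3 / 3))
  · filter_upwards with R
    exact ((Fc_cont x).comp (by continuity)).aestronglyMeasurable
  · filter_upwards with R
    filter_upwards with s hs'
    rw [Set.uIoc_of_le ha] at hs'
    rw [Fc_norm x σ s R hσ, Real.exp_le_exp]
    have h1 : 0 ≤ R ^ 2 * s := mul_nonneg (sq_nonneg R) hs'.1.le
    have h2 : s ^ 3 ≤ a ^ 3 := by
      apply pow_le_pow_left₀ hs'.1.le hs'.2 3
    nlinarith [mul_nonneg hx hs'.1.le]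
  · apply _root_.intervalIntegrable_const
  · filter_upwards with s
    intro hs'
    rw [Set.uIoc_of_le ha] at hs'
    rw [tendsto_zero_iff_norm_tendsto_zero]
    have : (fun R : ℝ => ‖Fc x (σ * R + s * Complex.I)‖)
        = fun R => Real.exp (-(R ^ 2 * s) + s ^ 3 / 3 - x * s) := by
      ext R; exact Fc_norm x σ s R hσ
    rw [this]
    apply Real.tendsto_exp_atBot.comp
    apply tendsto_atBot_add_const_right
    apply tendsto_atBot_add_const_right
    rw [tendsto_neg_atBot_iff]
    exact (tendsto_pow_atTop two_ne_zero).atTop_mul_const hs'.1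

lemma Fc_horiz (a t : ℝ) : Fc (a ^ 2) (t + a * Complex.I)
    = Real.exp (-(a * t ^ 2) - 2 * a ^ 3 / 3) *
      (Real.cos (t ^ 3 / 3) + Real.sin (t ^ 3 / 3) * Complex.I) := by
  rw [Fc]
  have h1 : Complex.I * (((t : ℂ) + a * Complex.I) ^ 3 / 3 + (a ^ 2 : ℝ) * ((t : ℂ) + a * Complex.I))
      = ((-(a * t ^ 2) - 2 * a ^ 3 / 3 : ℝ) : ℂ) + ((t ^ 3 / 3 : ℝ) : ℂ) * Complex.I := by
    push_cast; ring_nf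
    rw [Complex.I_sq, _root_.I_pow_three, show Complex.I ^ 4 = 1 by rw [pow_succ, _root_.I_pow_three]; simp [Complex.I_mul_I]]
    ring
  rw [h1, Complex.exp_add, Complex.exp_mul_I, ← Complex.ofReal_exp, ← Complex.ofReal_cos,
    ← Complex.ofReal_sin]

lemma Fc_horiz_norm (a t : ℝ) :
    ‖Fc (a ^ 2) (t + a * Complex.I)‖ = Real.exp (-(a * t ^ 2) - 2 * a ^ 3 / 3) := by
  rw [Fc_horiz, norm_mul, Complex.norm_real, Real.norm_eq_abs, abs_of_pos (Real.exp_pos _)]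
  have : (Real.cos (t ^ 3 / 3) : ℂ) + Real.sin (t ^ 3 / 3) * Complex.I
      = Complex.exp ((t ^ 3 / 3 : ℝ) * Complex.I) := by
    rw [Complex.exp_mul_I, ← Complex.ofReal_cos, ← Complex.ofReal_sin]
  rw [this, Complex.norm_exp]
  simp [← Complex.ofReal_pow]

lemma Fc_horiz_integrable (a : ℝ) (ha : 0 < a) :
    Integrable (fun t : ℝ => Fc (a ^ 2) (t + a * Complex.I)) := by
  apply Integrable.mono' ((integrable_exp_neg_mul_sq ha).mul_const (Real.exp (-2 * a ^ 3 / 3)))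
  · exact ((Fc_cont _).comp (by continuity)).aestronglyMeasurable
  · filter_upwards with t
    rw [Fc_horiz_norm, ← Real.exp_add]
    apply le_of_eq
    congr 1
    ring

lemma Fc_real (x t : ℝ) : Fc x t = Complex.exp (((t ^ 3 / 3 + x * t : ℝ) : ℂ) * Complex.I) := by
  rw [Fc]; congr 1; push_cast; ring

lemma symm_eq (x R : ℝ) :
    (∫ t : ℝ in -R..R, Fc x t)
      = ((2 * ∫ t in (0:ℝ)..R, Real.cos (t ^ 3 / 3 + x * t) : ℝ) : ℂ) := by
  have hc : Continuous (fun t : ℝ => Fc x t) := (Fc_cont x).comp Complex.continuous_ofReal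
  have hint : ∀ b c : ℝ, IntervalIntegrable (fun t : ℝ => Fc x t) MeasureTheory.volume b c :=
    fun b c => hc.intervalIntegrable b c
  rw [← intervalIntegral.integral_add_adjacent_intervals (hint (-R) 0) (hint 0 R)]
  have h1 : (∫ t : ℝ in (0:ℝ)..R, Fc x (↑(-t))) = ∫ t : ℝ in -R..0, Fc x ↑t := by
    have := intervalIntegral.integral_comp_neg (a := (0:ℝ)) (b := R) (f := fun t : ℝ => Fc x ↑t)
    simpa using this
  have hnegint : IntervalIntegrable (fun t : ℝ => Fc x (↑(-t))) MeasureTheory.volume 0 R :=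
    (hc.comp continuous_neg).intervalIntegrable 0 R
  rw [← h1, ← intervalIntegral.integral_add hnegint (hint 0 R)]
  have h2 : ∀ t : ℝ, Fc x (↑(-t)) + Fc x ↑t
      = ((2 * Real.cos (t ^ 3 / 3 + x * t) : ℝ) : ℂ) := by
    intro t
    rw [Fc_real, Fc_real, Complex.exp_mul_I, Complex.exp_mul_I, ← Complex.ofReal_cos,
      ← Complex.ofReal_cos, ← Complex.ofReal_sin, ← Complex.ofReal_sin,
      show (-t) ^ 3 / 3 + x * (-t) = -(t ^ 3 / 3 + x * t) by ring, Real.cos_neg, Real.sin_neg]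
    push_cast; ring
  simp_rw [h2]
  rw [intervalIntegral.integral_ofReal]
  norm_cast
  rw [intervalIntegral.integral_const_mul]

lemma key_complex (Ai : ℝ → ℝ) (a : ℝ) (ha : 0 < a)
    (hA : Tendsto (fun R : ℝ => (1 / π) * ∫ t in (0:ℝ)..R, Real.cos (t ^ 3 / 3 + a ^ 2 * t))
      atTop (nhds (Ai (a ^ 2)))) :
    ((2 * π * Ai (a ^ 2) : ℝ) : ℂ) = ∫ t : ℝ, Fc (a ^ 2) (↑t + a * Complex.I) := by
  have hx : (0:ℝ) < a ^ 2 := by positivity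
  -- limit 1 : symmetric integrals tend to 2π Ai(a²)
  have L1 : Tendsto (fun R : ℝ => ∫ t : ℝ in -R..R, Fc (a ^ 2) ↑t) atTop
      (nhds ((2 * π * Ai (a ^ 2) : ℝ) : ℂ)) := by
    simp_rw [symm_eq]
    apply Tendsto.comp (Complex.continuous_ofReal.tendsto _)
    have : (fun R : ℝ => 2 * ∫ t in (0:ℝ)..R, Real.cos (t ^ 3 / 3 + a ^ 2 * t))
        = fun R : ℝ => (2 * π) * ((1 / π) * ∫ t in (0:ℝ)..R, Real.cos (t ^ 3 / 3 + a ^ 2 * t)) := by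
      ext R
      rw [← mul_assoc, show (2 * π) * (1 / π) = 2 by field_simp]
    rw [this]
    exact hA.const_mul (2 * π)
  -- limit 2 : same tends to shifted integral
  have L2 : Tendsto (fun R : ℝ => ∫ t : ℝ in -R..R, Fc (a ^ 2) ↑t) atTop
      (nhds (∫ t : ℝ, Fc (a ^ 2) (↑t + a * Complex.I))) := by
    have hEq : ∀ R : ℝ, (∫ t : ℝ in -R..R, Fc (a ^ 2) ↑t)
        = (∫ t : ℝ in -R..R, Fc (a ^ 2) (↑t + a * Complex.I))
          - Complex.I • (∫ s : ℝ in (0:ℝ)..a, Fc (a ^ 2) (R + s * Complex.I))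
          + Complex.I • (∫ s : ℝ in (0:ℝ)..a, Fc (a ^ 2) (-R + s * Complex.I)) := by
      intro R
      have h := rect_eq (a ^ 2) a R
      simp only [smul_eq_mul] at h ⊢
      linear_combination h
    simp_rw [hEq]
    have hB : Tendsto (fun R : ℝ => ∫ t : ℝ in -R..R, Fc (a ^ 2) (↑t + a * Complex.I)) atTop
        (nhds (∫ t : ℝ, Fc (a ^ 2) (↑t + a * Complex.I))) :=
      intervalIntegral_tendsto_integral (Fc_horiz_integrable a ha) tendsto_neg_atTop_atBot
        tendsto_id
    have hC : Tendsto (fun R : ℝ => Complex.I • ∫ s : ℝ in (0:ℝ)..a,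
        Fc (a ^ 2) (R + s * Complex.I)) atTop (nhds 0) := by
      have := (side_tendsto (a ^ 2) a 1 hx.le ha.le (Or.inl rfl)).const_smul Complex.I
      simpa using this
    have hD : Tendsto (fun R : ℝ => Complex.I • ∫ s : ℝ in (0:ℝ)..a,
        Fc (a ^ 2) (-R + s * Complex.I)) atTop (nhds 0) := by
      have := (side_tendsto (a ^ 2) a (-1) hx.le ha.le (Or.inr rfl)).const_smul Complex.I
      simpa using this
    simpa using (hB.sub hC).add hD
  exact tendsto_nhds_unique L1 L2

lemma key_real (Ai : ℝ → ℝ) (a : ℝ) (ha : 0 < a)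
    (hA : Tendsto (fun R : ℝ => (1 / π) * ∫ t in (0:ℝ)..R, Real.cos (t ^ 3 / 3 + a ^ 2 * t))
      atTop (nhds (Ai (a ^ 2)))) :
    2 * π * Ai (a ^ 2)
      = ∫ t : ℝ, Real.exp (-(a * t ^ 2) - 2 * a ^ 3 / 3) * Real.cos (t ^ 3 / 3) := by
  have h := key_complex Ai a ha hA
  have h2 : ((2 * π * Ai (a ^ 2) : ℝ) : ℂ).re = 2 * π * Ai (a ^ 2) := by simp
  rw [← h2, h]
  have hre : Complex.re = RCLike.re := rfl
  rw [hre, ← _root_.integral_re (Fc_horiz_integrable a ha)]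
  congr 1
  ext t
  rw [Fc_horiz]
  simp only [Complex.mul_re, Complex.add_re, Complex.add_im, Complex.ofReal_re,
    Complex.ofReal_im, Complex.mul_im, Complex.I_re, Complex.I_im, RCLike.re_to_complex]
  ring

lemma gauss_integrable : Integrable (fun v : ℝ => Real.exp (-v ^ 2)) := by
  have := integrable_exp_neg_mul_sq (one_pos (α := ℝ))
  simpa using this

lemma Jint_tendsto :
    Tendsto (fun x : ℝ => ∫ v : ℝ, Real.exp (-v ^ 2) * Real.cos (v ^ 3 * x ^ (-(3:ℝ)/4) / 3))
      atTop (nhds (Real.sqrt π)) := by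
  have h0 : Tendsto (fun x : ℝ => x ^ (-(3:ℝ)/4)) atTop (nhds 0) := by
    have := tendsto_rpow_neg_atTop (y := (3:ℝ)/4) (by norm_num)
    convert this using 2
    norm_num
  have hlim : (Real.sqrt π) = ∫ v : ℝ, Real.exp (-v ^ 2) := by
    have := integral_gaussian 1
    simp only [neg_mul, one_mul, div_one] at this
    rw [← this]
  rw [hlim]
  apply MeasureTheory.tendsto_integral_filter_of_dominated_convergence
      (fun v => Real.exp (-v ^ 2))
  · filter_upwards with x
    exact (Continuous.aestronglyMeasurable (by continuity))
  · filter_upwards with x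
    filter_upwards with v
    rw [norm_mul, Real.norm_eq_abs, Real.norm_eq_abs, abs_of_pos (Real.exp_pos _)]
    nth_rewrite 2 [← mul_one (Real.exp (-v ^ 2))]
    exact mul_le_mul_of_nonneg_left (Real.abs_cos_le_one _) (Real.exp_pos _).le
  · exact gauss_integrable
  · filter_upwards with v
    have : Tendsto (fun x : ℝ => v ^ 3 * x ^ (-(3:ℝ)/4) / 3) atTop (nhds 0) := by
      have := (h0.const_mul (v ^ 3)).div_const 3
      simpa using this
    have hc : Tendsto (fun x : ℝ => Real.cos (v ^ 3 * x ^ (-(3:ℝ)/4) / 3)) atTop (nhds 1) := by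
      have := (Real.continuous_cos.tendsto 0).comp this
      simpa [Function.comp_def] using this
    have := hc.const_mul (Real.exp (-v ^ 2))
    simpa using this

lemma pointwise_eq (Ai : ℝ → ℝ) (x : ℝ) (hx : 0 < x)
    (hAx : Tendsto (fun R : ℝ => (1 / π) * ∫ t in (0:ℝ)..R, Real.cos (t ^ 3 / 3 + x * t))
      atTop (nhds (Ai x))) :
    Ai x * (2 * Real.sqrt π * x ^ ((1:ℝ)/4)) * Real.exp (2/3 * x ^ ((3:ℝ)/2))
      = (1 / Real.sqrt π)
        * ∫ v : ℝ, Real.exp (-v ^ 2) * Real.cos (v ^ 3 * x ^ (-(3:ℝ)/4) / 3) := by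
  set a : ℝ := Real.sqrt x with ha_def
  set b : ℝ := x ^ ((1:ℝ)/4) with hb_def
  set c : ℝ := x ^ (-(3:ℝ)/4) with hc_def
  have ha : 0 < a := Real.sqrt_pos.2 hx
  have hb : 0 < b := Real.rpow_pos_of_pos hx _
  have ha2 : a ^ 2 = x := Real.sq_sqrt hx.le
  have hb2 : b ^ 2 = a := by
    rw [hb_def, ha_def, ← Real.rpow_natCast (x ^ ((1:ℝ)/4)) 2, ← Real.rpow_mul hx.le,
      Real.sqrt_eq_rpow]
    norm_num
  have hb3c : b ^ 3 * c = 1 := by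
    rw [hb_def, hc_def, ← Real.rpow_natCast (x ^ ((1:ℝ)/4)) 3, ← Real.rpow_mul hx.le,
      ← Real.rpow_add hx]
    norm_num
  have ha3 : a ^ 3 = x ^ ((3:ℝ)/2) := by
    rw [ha_def, Real.sqrt_eq_rpow, ← Real.rpow_natCast (x ^ ((1:ℝ)/2)) 3,
      ← Real.rpow_mul hx.le]
    norm_num
  have hA' : Tendsto (fun R : ℝ => (1 / π) * ∫ t in (0:ℝ)..R, Real.cos (t ^ 3 / 3 + a ^ 2 * t))
      atTop (nhds (Ai (a ^ 2))) := by rw [ha2]; exact hAx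
  have hkey := key_real Ai a ha hA'
  rw [ha2] at hkey
  set Jint : ℝ := ∫ v : ℝ, Real.exp (-v ^ 2) * Real.cos (v ^ 3 * c / 3) with hJ_def
  have hsub : (∫ t : ℝ, Real.exp (-(a * t ^ 2) - 2 * a ^ 3 / 3) * Real.cos (t ^ 3 / 3))
      = Real.exp (-2 * a ^ 3 / 3) * (b⁻¹ * Jint) := by
    have h1 : ∀ t : ℝ, Real.exp (-(a * t ^ 2) - 2 * a ^ 3 / 3) * Real.cos (t ^ 3 / 3)
        = Real.exp (-2 * a ^ 3 / 3)
          * (Real.exp (-(b * t) ^ 2) * Real.cos ((b * t) ^ 3 * c / 3)) := by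
      intro t
      have e1 : (b * t) ^ 2 = a * t ^ 2 := by rw [mul_pow, hb2]
      have e2 : (b * t) ^ 3 * c / 3 = t ^ 3 / 3 := by
        rw [mul_pow, show b ^ 3 * t ^ 3 * c = (b ^ 3 * c) * t ^ 3 by ring, hb3c, one_mul]
      rw [e1, e2, ← mul_assoc, ← Real.exp_add]
      congr 2
      ring
    simp_rw [h1]
    rw [MeasureTheory.integral_const_mul]
    congr 1
    have h2 := MeasureTheory.Measure.integral_comp_mul_left
      (fun v : ℝ => Real.exp (-v ^ 2) * Real.cos (v ^ 3 * c / 3)) b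
    rw [abs_of_pos (inv_pos.2 hb), smul_eq_mul] at h2
    exact h2
  rw [hsub] at hkey
  -- now algebra
  have hπ : Real.sqrt π * Real.sqrt π = π := Real.mul_self_sqrt pi_pos.le
  have hsπ : (0:ℝ) < Real.sqrt π := Real.sqrt_pos.2 pi_pos
  have hexp : Real.exp (-2 * a ^ 3 / 3) * Real.exp (2/3 * x ^ ((3:ℝ)/2)) = 1 := by
    rw [← Real.exp_add, ← ha3, show -2 * a ^ 3 / 3 + 2/3 * a ^ 3 = 0 by ring, Real.exp_zero]
  have hAix : Ai x = Real.exp (-2 * a ^ 3 / 3) * (b⁻¹ * Jint) / (2 * π) := by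
    rw [eq_div_iff (by positivity : (2 * π : ℝ) ≠ 0)]
    linarith [hkey]
  rw [hAix]
  rw [div_mul_eq_mul_div, div_mul_eq_mul_div, div_eq_iff (by positivity : (2 * π : ℝ) ≠ 0)]
  have expand : Real.exp (-2 * a ^ 3 / 3) * (b⁻¹ * Jint) * (2 * Real.sqrt π * b)
        * Real.exp (2/3 * x ^ ((3:ℝ)/2))
      = (Real.exp (-2 * a ^ 3 / 3) * Real.exp (2/3 * x ^ ((3:ℝ)/2))) * (b⁻¹ * b)
        * (2 * Real.sqrt π * Jint) := by ring
  rw [expand, hexp, inv_mul_cancel₀ hb.ne', one_mul, one_mul]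
  field_simp
  rw [sq, hπ]
  ring

/-- Right-tail asymptotics of the Airy function, where `Ai` is characterized as the
value of the conditionally convergent oscillatory integral
`Ai(x) = (1/π) lim_{R→∞} ∫_0^R cos(t³/3 + x t) dt`. -/
theorem stmt19 (Ai : ℝ → ℝ)
    (hAi : ∀ x : ℝ, Tendsto (fun R : ℝ => (1 / π) * ∫ t in (0:ℝ)..R, Real.cos (t ^ 3 / 3 + x * t))
      atTop (nhds (Ai x))) :
    Tendsto (fun x : ℝ =>
        Ai x * (2 * Real.sqrt π * x ^ ((1:ℝ)/4)) * Real.exp (2/3 * x ^ ((3:ℝ)/2)))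
      atTop (nhds 1) := by
  have hsπ : (0:ℝ) < Real.sqrt π := Real.sqrt_pos.2 pi_pos
  have main : Tendsto (fun x : ℝ => (1 / Real.sqrt π)
      * ∫ v : ℝ, Real.exp (-v ^ 2) * Real.cos (v ^ 3 * x ^ (-(3:ℝ)/4) / 3)) atTop (nhds 1) := by
    have := Jint_tendsto.const_mul (1 / Real.sqrt π)
    rw [show (1 / Real.sqrt π) * Real.sqrt π = 1 by field_simp] at this
    exact this
  apply main.congr'
  filter_upwards [eventually_gt_atTop (0:ℝ)] with x hx
  exact (pointwise_eq Ai x hx (hAi x)).symm
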